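/- Under the assumptions of Theorem 1 (three all-to-all coupled Kuramoto oscillators, |ω₁ - ω₂|/(2c) < ν, ω₃ = (ω₁+ω₂)/2), there exists a phase-locked configuration with |θ₁ - θ₂| ≤ χ < 2π/3. -/
import Mathlib


open Real

theorem kuramoto_three_exists_phase_locked
    (c ω₁ ω₂ ω₃ χ ν : ℝ) (hc : 0 < c)
    (hχ : χ = 2 * arccos ((-1 + Real.sqrt 33) / 8))
    (hν : ν = sin χ + sin (χ / 2))
    (hfreq : |ω₁ - ω₂| / (2 * c) < ν)
    (hω₃ : ω₃ = (ω₁ + ω₂) / 2) :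
    ∃ θ₁ θ₂ θ₃ : ℝ,
      (ω₁ + c * (sin (θ₂ - θ₁) + sin (θ₃ - θ₁)))
        = (ω₂ + c * (sin (θ₁ - θ₂) + sin (θ₃ - θ₂))) ∧
      (ω₁ + c * (sin (θ₂ - θ₁) + sin (θ₃ - θ₁)))
        = (ω₃ + c * (sin (θ₁ - θ₃) + sin (θ₂ - θ₃))) ∧
      |θ₁ - θ₂| ≤ χ ∧ χ < 2 * π / 3 := by
  have h2c : (0:ℝ) < 2 * c := by linarith
  have hΔν : |(ω₁ - ω₂) / (2 * c)| < ν := by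
    rwa [abs_div, abs_of_pos h2c]
  have hχ0 : 0 ≤ χ := by
    have := Real.arccos_nonneg ((-1 + Real.sqrt 33) / 8)
    linarith [hχ ▸ (by linarith : (0:ℝ) ≤ 2 * arccos ((-1 + Real.sqrt 33) / 8))]
  have hle : -(χ/2) ≤ χ/2 := by linarith
  have hcont : ContinuousOn (fun a : ℝ => sin (2*a) + sin a) (Set.Icc (-(χ/2)) (χ/2)) := by
    apply Continuous.continuousOn; continuity
  have key := intermediate_value_Icc hle hcont
  have hmem : (ω₁ - ω₂) / (2 * c) ∈
      Set.Icc ((fun a : ℝ => sin (2*a) + sin a) (-(χ/2)))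
        ((fun a : ℝ => sin (2*a) + sin a) (χ/2)) := by
    have habs := abs_lt.mp hΔν
    constructor
    · show sin (2 * -(χ/2)) + sin (-(χ/2)) ≤ _
      rw [show 2 * -(χ/2) = -χ by ring, Real.sin_neg, Real.sin_neg]
      rw [hν] at habs
      linarith [habs.1]
    · show _ ≤ sin (2 * (χ/2)) + sin (χ/2)
      rw [show 2 * (χ/2) = χ by ring]
      rw [hν] at habs
      linarith [habs.2]
  obtain ⟨a, ha, hfa⟩ := key hmem
  simp only at hfa
  have e' : 2 * c * (sin (2*a) + sin a) = ω₁ - ω₂ := by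
    field_simp at hfa
    linarith [hfa]
  -- χ < 2π/3
  have h5 : (5:ℝ) < Real.sqrt 33 := by
    nlinarith [Real.sq_sqrt (by norm_num : (0:ℝ) ≤ 33), Real.sqrt_nonneg 33]
  have h6 : Real.sqrt 33 < 6 := by
    nlinarith [Real.sq_sqrt (by norm_num : (0:ℝ) ≤ 33), Real.sqrt_nonneg 33]
  have harc : Real.arccos ((-1 + Real.sqrt 33) / 8) < Real.arccos (1/2) := by
    apply Real.strictAntiOn_arccos ⟨by norm_num, by norm_num⟩
      ⟨by nlinarith, by nlinarith⟩ (by nlinarith)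
  have hhalf : Real.arccos (1/2) = π / 3 := by
    rw [show (1:ℝ)/2 = Real.cos (π/3) by rw [Real.cos_pi_div_three]]
    exact Real.arccos_cos (by positivity) (by linarith [Real.pi_pos])
  have hχlt : χ < 2 * π / 3 := by
    rw [hχ]
    rw [hhalf] at harc
    linarith
  refine ⟨a, -a, 0, ?_, ?_, ?_, hχlt⟩
  · rw [show -a - a = -(2*a) by ring, show (0:ℝ) - a = -a by ring,
      show a - -a = 2*a by ring, show (0:ℝ) - -a = a by ring,
      Real.sin_neg, Real.sin_neg]
    linear_combination -e'
  · rw [show -a - a = -(2*a) by ring, show (0:ℝ) - a = -a by ring,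
      show a - (0:ℝ) = a by ring, show -a - (0:ℝ) = -a by ring,
      Real.sin_neg, Real.sin_neg, hω₃]
    linear_combination (-1/2 : ℝ) * e'
  · rw [show a - -a = 2*a by ring, abs_le]
    constructor <;> [linarith [ha.1]; linarith [ha.2]]
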